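/- Let d ≥ 1, K ∈ ℕ, r̃ > 0, N > 0 and 0 < δ₀ ≤ 1/8. Let ω ∈ ℝ^d and Ω̄ ∈ ℝ satisfy |⟨k,ω⟩ − 2Ω̄| ≥ N/2 for every k ∈ ℤ^d with |k| ≤ K. Let (Ω̃_j)_{j∈ℤ^d} be complex numbers with Ω̃_0 = 0 and Σ_{j∈ℤ^d} |Ω̃_j| e^{|j| r̃} ≤ N δ₀. Then for every family of complex numbers (P_k)_{|k|≤K}, the linear system (⟨k,ω⟩ − 2Ω̄) F_k − 2 Σ_{|l|≤K} Ω̃_{k−l} F_l = i P_k (for all |k| ≤ K) has a unique solution (F_k)_{|k|≤K}, and it satisfies Σ_{|k|≤K} |F_k| e^{|k| r̃} ≤ (4/N) Σ_{|k|≤K} |P_k| e^{|k| r̃}. -/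

import Mathlib

/-- the high-mode truncated homological equation in Fourier form: the
linear system `(⟨k,ω⟩ − 2Ω̄)F_k − 2Σ_{|l|≤K} Ω̃_{k−l}F_l = iP_k` (`|k| ≤ K`), with
divisors `|⟨k,ω⟩ − 2Ω̄| ≥ N/2` and a small perturbation `Ω̃`, has a unique solution,
satisfying `Σ_{|k|≤K}|F_k|e^{|k|r̃} ≤ (4/N) Σ_{|k|≤K}|P_k|e^{|k|r̃}`. -/
theorem high_mode_homological_system (d : ℕ) (hd : 1 ≤ d) (K : ℕ)
    (rt N δ₀ : ℝ) (hrt : 0 < rt) (hN : 0 < N) (hδ₀ : 0 < δ₀) (hδ₀' : δ₀ ≤ 1 / 8)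
    (ω : Fin d → ℝ) (Ωb : ℝ)
    (hdiv : ∀ k : Fin d → ℤ, (∑ j, |k j|) ≤ (K : ℤ) →
      N / 2 ≤ |(∑ j, (k j : ℝ) * ω j) - 2 * Ωb|)
    (Ωt : (Fin d → ℤ) → ℂ) (hΩt0 : Ωt 0 = 0)
    (hΩtSum : Summable fun j : Fin d → ℤ =>
      ‖Ωt j‖ * Real.exp (((∑ i, |j i| : ℤ) : ℝ) * rt))
    (hΩtBd : (∑' j : Fin d → ℤ,
      ‖Ωt j‖ * Real.exp (((∑ i, |j i| : ℤ) : ℝ) * rt)) ≤ N * δ₀)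
    (P : (Fin d → ℤ) → ℂ)
    (hPsupp : ∀ k : Fin d → ℤ, ¬((∑ j, |k j|) ≤ (K : ℤ)) → P k = 0) :
    ∃ F : (Fin d → ℤ) → ℂ,
      (∀ k : Fin d → ℤ, ¬((∑ j, |k j|) ≤ (K : ℤ)) → F k = 0) ∧
      (∀ k : Fin d → ℤ, (∑ j, |k j|) ≤ (K : ℤ) →
        ((((∑ j, (k j : ℝ) * ω j) - 2 * Ωb : ℝ)) : ℂ) * F k -
            2 * ∑' l : Fin d → ℤ, Ωt (k - l) * F l
          = Complex.I * P k) ∧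
      (∀ F' : (Fin d → ℤ) → ℂ,
        (∀ k : Fin d → ℤ, ¬((∑ j, |k j|) ≤ (K : ℤ)) → F' k = 0) →
        (∀ k : Fin d → ℤ, (∑ j, |k j|) ≤ (K : ℤ) →
          ((((∑ j, (k j : ℝ) * ω j) - 2 * Ωb : ℝ)) : ℂ) * F' k -
              2 * ∑' l : Fin d → ℤ, Ωt (k - l) * F' l
            = Complex.I * P k) →
        F' = F) ∧
      Summable (fun k : Fin d → ℤ =>
        ‖F k‖ * Real.exp (((∑ j, |k j| : ℤ) : ℝ) * rt)) ∧
      (∑' k : Fin d → ℤ, ‖F k‖ * Real.exp (((∑ j, |k j| : ℤ) : ℝ) * rt))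
        ≤ (4 / N) *
          ∑' k : Fin d → ℤ, ‖P k‖ * Real.exp (((∑ j, |k j| : ℤ) : ℝ) * rt) := by
  classical
  -- the finite set of admissible modes
  set S : Finset (Fin d → ℤ) :=
    (Finset.Icc (fun _ => -(K:ℤ)) (fun _ => (K:ℤ))).filter (fun k => ∑ j, |k j| ≤ (K:ℤ)) with hSdef
  have hSmem : ∀ k : Fin d → ℤ, k ∈ S ↔ (∑ j, |k j|) ≤ (K:ℤ) := by
    intro k
    constructor
    · intro hk; exact (Finset.mem_filter.mp hk).2
    · intro hk
      refine Finset.mem_filter.mpr ⟨?_, hk⟩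
      have hj : ∀ j, |k j| ≤ (K:ℤ) := fun j =>
        le_trans (Finset.single_le_sum (f := fun j => |k j|) (fun i _ => abs_nonneg _)
          (Finset.mem_univ j)) hk
      refine Finset.mem_Icc.mpr ⟨fun j => neg_le_of_abs_le (hj j), fun j => le_of_abs_le (hj j)⟩
  -- weight
  set w : (Fin d → ℤ) → ℝ := fun k => Real.exp (((∑ j, |k j| : ℤ) : ℝ) * rt) with hwdef
  have hw_pos : ∀ k, 0 < w k := fun k => Real.exp_pos _
  have hw_sub : ∀ k l : Fin d → ℤ, w k ≤ w (k - l) * w l := by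
    intro k l
    rw [hwdef]; dsimp only
    rw [← Real.exp_add]
    apply Real.exp_le_exp.mpr
    rw [← add_mul]
    apply mul_le_mul_of_nonneg_right _ hrt.le
    push_cast
    rw [← Finset.sum_add_distrib]
    apply Finset.sum_le_sum
    intro j _
    have h1 : |(k j : ℝ)| = |((k j : ℝ) - (l j : ℝ)) + (l j : ℝ)| := by ring_nf
    rw [h1]
    have := abs_add_le ((k j : ℝ) - (l j : ℝ)) ((l j : ℝ))
    simpa using this
  -- divisor
  set D : (Fin d → ℤ) → ℝ := fun k => (∑ j, (k j : ℝ) * ω j) - 2 * Ωb with hDdef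
  have hD : ∀ k ∈ S, N / 2 ≤ |D k| := fun k hk => hdiv k ((hSmem k).mp hk)
  -- key convolution bound
  have key : ∀ l : Fin d → ℤ, ∑ k ∈ S, ‖Ωt (k - l)‖ * w k ≤ (N * δ₀) * w l := by
    intro l
    have step1 : ∑ k ∈ S, ‖Ωt (k - l)‖ * w k
        ≤ (∑ k ∈ S, ‖Ωt (k - l)‖ * w (k - l)) * w l := by
      rw [Finset.sum_mul]
      apply Finset.sum_le_sum
      intro k _
      rw [mul_assoc]
      exact mul_le_mul_of_nonneg_left (hw_sub k l) (norm_nonneg _)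
    have step2 : ∑ k ∈ S, ‖Ωt (k - l)‖ * w (k - l)
        = ∑ j ∈ S.image (fun k => k - l), ‖Ωt j‖ * w j := by
      rw [Finset.sum_image]
      intro a _ b _ h
      exact sub_left_injective h
    have step3 : ∑ j ∈ S.image (fun k => k - l), ‖Ωt j‖ * w j
        ≤ ∑' j : Fin d → ℤ, ‖Ωt j‖ * w j :=
      Summable.sum_le_tsum _ (fun b _ => mul_nonneg (norm_nonneg _) (hw_pos b).le) hΩtSum
    calc ∑ k ∈ S, ‖Ωt (k - l)‖ * w k
        ≤ (∑ k ∈ S, ‖Ωt (k - l)‖ * w (k - l)) * w l := step1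
      _ ≤ (N * δ₀) * w l := by
          apply mul_le_mul_of_nonneg_right _ (hw_pos l).le
          rw [step2]; exact le_trans step3 hΩtBd
  -- a priori estimate
  have aux : ∀ F Q : (Fin d → ℤ) → ℂ,
      (∀ k ∈ S, ((D k : ℝ) : ℂ) * F k - 2 * ∑ l ∈ S, Ωt (k - l) * F l = Complex.I * Q k) →
      N / 4 * ∑ k ∈ S, ‖F k‖ * w k ≤ ∑ k ∈ S, ‖Q k‖ * w k := by
    intro F Q hFQ
    set X := ∑ k ∈ S, ‖F k‖ * w k with hX
    have hX0 : 0 ≤ X :=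
      Finset.sum_nonneg fun k _ => mul_nonneg (norm_nonneg _) (hw_pos k).le
    have h1 : ∀ k ∈ S, N / 2 * (‖F k‖ * w k)
        ≤ (‖Q k‖ + 2 * ∑ l ∈ S, ‖Ωt (k - l)‖ * ‖F l‖) * w k := by
      intro k hk
      have heq : ((D k : ℝ) : ℂ) * F k = Complex.I * Q k + 2 * ∑ l ∈ S, Ωt (k - l) * F l := by
        have := hFQ k hk; linear_combination this
      have habs : |D k| * ‖F k‖
          ≤ ‖Q k‖ + 2 * ∑ l ∈ S, ‖Ωt (k - l)‖ * ‖F l‖ := by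
        calc |D k| * ‖F k‖
            = ‖((D k : ℝ) : ℂ) * F k‖ := by rw [norm_mul, Complex.norm_real, Real.norm_eq_abs]
          _ = ‖Complex.I * Q k + 2 * ∑ l ∈ S, Ωt (k - l) * F l‖ := by rw [heq]
          _ ≤ ‖Complex.I * Q k‖ + ‖2 * ∑ l ∈ S, Ωt (k - l) * F l‖ :=
              norm_add_le _ _
          _ ≤ ‖Q k‖ + 2 * ∑ l ∈ S, ‖Ωt (k - l)‖ * ‖F l‖ := by
              rw [norm_mul, Complex.norm_I, one_mul, norm_mul]
              gcongr
              · simp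
              · calc ‖∑ l ∈ S, Ωt (k - l) * F l‖
                    ≤ ∑ l ∈ S, ‖Ωt (k - l) * F l‖ := norm_sum_le _ _
                  _ = ∑ l ∈ S, ‖Ωt (k - l)‖ * ‖F l‖ := by
                      apply Finset.sum_congr rfl; intro l _; rw [norm_mul]
      have hDk := hD k hk
      have hFk := norm_nonneg (F k)
      have hwk := (hw_pos k).le
      nlinarith [mul_le_mul_of_nonneg_right (mul_le_mul_of_nonneg_right hDk hFk) hwk,
        mul_le_mul_of_nonneg_right habs hwk]
    have h2 := Finset.sum_le_sum h1
    rw [← Finset.mul_sum] at h2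
    have h3 : ∑ k ∈ S, (‖Q k‖ + 2 * ∑ l ∈ S, ‖Ωt (k - l)‖ * ‖F l‖) * w k
        = (∑ k ∈ S, ‖Q k‖ * w k)
          + 2 * ∑ k ∈ S, (∑ l ∈ S, ‖Ωt (k - l)‖ * ‖F l‖) * w k := by
      rw [Finset.mul_sum, ← Finset.sum_add_distrib]
      apply Finset.sum_congr rfl; intro k _; ring
    have h4 : ∑ k ∈ S, (∑ l ∈ S, ‖Ωt (k - l)‖ * ‖F l‖) * w k
        ≤ (N * δ₀) * X := by
      have hswap : ∑ k ∈ S, (∑ l ∈ S, ‖Ωt (k - l)‖ * ‖F l‖) * w k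
          = ∑ l ∈ S, ‖F l‖ * ∑ k ∈ S, ‖Ωt (k - l)‖ * w k := by
        calc ∑ k ∈ S, (∑ l ∈ S, ‖Ωt (k - l)‖ * ‖F l‖) * w k
            = ∑ k ∈ S, ∑ l ∈ S, ‖Ωt (k - l)‖ * ‖F l‖ * w k := by
              apply Finset.sum_congr rfl; intro k _; rw [Finset.sum_mul]
          _ = ∑ l ∈ S, ∑ k ∈ S, ‖Ωt (k - l)‖ * ‖F l‖ * w k :=
              Finset.sum_comm
          _ = ∑ l ∈ S, ‖F l‖ * ∑ k ∈ S, ‖Ωt (k - l)‖ * w k := by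
              apply Finset.sum_congr rfl; intro l _
              rw [Finset.mul_sum]
              apply Finset.sum_congr rfl; intro k _; ring
      rw [hswap, hX, Finset.mul_sum]
      apply Finset.sum_le_sum
      intro l _
      calc ‖F l‖ * ∑ k ∈ S, ‖Ωt (k - l)‖ * w k
          ≤ ‖F l‖ * ((N * δ₀) * w l) :=
            mul_le_mul_of_nonneg_left (key l) (norm_nonneg _)
        _ = N * δ₀ * (‖F l‖ * w l) := by ring
    rw [h3] at h2
    nlinarith [mul_le_mul_of_nonneg_left hδ₀' (le_of_lt hN)]
  -- matrix setup
  set vecP : {x // x ∈ S} → ℂ := fun k => Complex.I * P k.1 with hvecP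
  set A : Matrix {x // x ∈ S} {x // x ∈ S} ℂ :=
    fun k l => (if k = l then ((D k.1 : ℝ) : ℂ) else 0) - 2 * Ωt (k.1 - l.1) with hA
  have hmul : ∀ (f : {x // x ∈ S} → ℂ) (k : {x // x ∈ S}),
      A.mulVecLin f k = ((D k.1 : ℝ) : ℂ) * f k - 2 * ∑ l : {x // x ∈ S}, Ωt (k.1 - l.1) * f l := by
    intro f k
    have : A.mulVecLin f k = ∑ l, A k l * f l := by
      simp [Matrix.mulVecLin, Matrix.mulVec, dotProduct]
    rw [this, hA]
    simp only [sub_mul, Finset.sum_sub_distrib, ite_mul, zero_mul]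
    rw [Finset.sum_ite_eq Finset.univ k (fun l => ((D k.1 : ℝ) : ℂ) * f l)]
    simp [Finset.mul_sum, mul_assoc]
  -- injectivity of the system
  have hker : ∀ f : {x // x ∈ S} → ℂ, A.mulVecLin f = 0 → f = 0 := by
    intro f hf
    set F : (Fin d → ℤ) → ℂ := fun k => if h : k ∈ S then f ⟨k, h⟩ else 0 with hF
    have hFval : ∀ (k : Fin d → ℤ) (hk : k ∈ S), F k = f ⟨k, hk⟩ := fun k hk => dif_pos hk
    have hFeq : ∀ k ∈ S, ((D k : ℝ) : ℂ) * F k - 2 * ∑ l ∈ S, Ωt (k - l) * F l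
        = Complex.I * (0 : (Fin d → ℤ) → ℂ) k := by
      intro k hk
      have h0 : A.mulVecLin f ⟨k, hk⟩ = 0 := by rw [hf]; rfl
      rw [hmul] at h0
      have hsum : ∑ l ∈ S, Ωt (k - l) * F l = ∑ l : {x // x ∈ S}, Ωt (k - l.1) * f l := by
        rw [← Finset.sum_coe_sort S (fun l => Ωt (k - l) * F l)]
        exact Finset.sum_congr rfl fun l _ => by rw [hFval l.1 l.2]
      simp only [Pi.zero_apply, mul_zero]
      rw [hFval k hk, hsum]
      exact h0
    have := aux F 0 hFeq
    simp only [Pi.zero_apply, norm_zero, zero_mul, Finset.sum_const_zero] at this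
    have hX0 : ∑ k ∈ S, ‖F k‖ * w k ≤ 0 := by nlinarith
    have hterm : ∀ k ∈ S, ‖F k‖ * w k = 0 := by
      intro k hk
      have := Finset.sum_nonneg (s := S)
        (f := fun k => ‖F k‖ * w k)
        (fun k _ => mul_nonneg (norm_nonneg _) (hw_pos k).le)
      have hall := (Finset.sum_eq_zero_iff_of_nonneg
        (fun k _ => mul_nonneg (norm_nonneg _) (hw_pos k).le)).mp (le_antisymm hX0 this)
      exact hall k hk
    funext k
    have hk := hterm k.1 k.2
    have : ‖F k.1‖ = 0 := by
      rcases mul_eq_zero.mp hk with h | h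
      · exact h
      · exact absurd h (ne_of_gt (hw_pos k.1))
    have hF0 : F k.1 = 0 := by simpa using this
    rw [hFval k.1 k.2] at hF0
    simpa using hF0
  have hinj : Function.Injective A.mulVecLin := (injective_iff_map_eq_zero A.mulVecLin).mpr hker
  have hsurj : Function.Surjective A.mulVecLin := LinearMap.injective_iff_surjective.mp hinj
  obtain ⟨g, hg⟩ := hsurj vecP
  set F : (Fin d → ℤ) → ℂ := fun k => if h : k ∈ S then g ⟨k, h⟩ else 0 with hF
  have hFval : ∀ (k : Fin d → ℤ) (hk : k ∈ S), F k = g ⟨k, hk⟩ := fun k hk => dif_pos hk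
  have hFsupp : ∀ k : Fin d → ℤ, ¬((∑ j, |k j|) ≤ (K : ℤ)) → F k = 0 := by
    intro k hk
    exact dif_neg (fun h => hk ((hSmem k).mp h))
  -- tsum reduces to Finset sum for compactly supported functions
  have htsumFin : ∀ (G : (Fin d → ℤ) → ℂ), (∀ k, k ∉ S → G k = 0) →
      ∀ k : Fin d → ℤ, (∑' l : Fin d → ℤ, Ωt (k - l) * G l) = ∑ l ∈ S, Ωt (k - l) * G l := by
    intro G hG k
    apply tsum_eq_sum
    intro b hb
    rw [hG b hb, mul_zero]
  have hFout : ∀ k, k ∉ S → F k = 0 := fun k hk => dif_neg hk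
  -- the finite-sum form of the equation for F
  have hFeqFin : ∀ k ∈ S, ((D k : ℝ) : ℂ) * F k - 2 * ∑ l ∈ S, Ωt (k - l) * F l
      = Complex.I * P k := by
    intro k hk
    have h0 : A.mulVecLin g ⟨k, hk⟩ = vecP ⟨k, hk⟩ := by rw [hg]
    rw [hmul, hvecP] at h0
    have hsum : ∑ l ∈ S, Ωt (k - l) * F l = ∑ l : {x // x ∈ S}, Ωt (k - l.1) * g l := by
      rw [← Finset.sum_coe_sort S (fun l => Ωt (k - l) * F l)]
      exact Finset.sum_congr rfl fun l _ => by rw [hFval l.1 l.2]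
    rw [hFval k hk, hsum]
    exact h0
  refine ⟨F, hFsupp, ?_, ?_, ?_, ?_⟩
  · -- equation
    intro k hk
    have hkS : k ∈ S := (hSmem k).mpr hk
    rw [htsumFin F hFout k]
    exact hFeqFin k hkS
  · -- uniqueness
    intro F' hF'supp hF'eq
    have hF'out : ∀ k, k ∉ S → F' k = 0 := fun k hk =>
      hF'supp k (fun h => hk ((hSmem k).mpr h))
    set f' : {x // x ∈ S} → ℂ := fun k => F' k.1 with hf'
    have hf'eq : A.mulVecLin f' = vecP := by
      funext k
      rw [hmul, hvecP]
      have hkK : (∑ j, |k.1 j|) ≤ (K : ℤ) := (hSmem k.1).mp k.2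
      have := hF'eq k.1 hkK
      rw [htsumFin F' hF'out k.1] at this
      have hsum : ∑ l ∈ S, Ωt (k.1 - l) * F' l = ∑ l : {x // x ∈ S}, Ωt (k.1 - l.1) * f' l := by
        rw [← Finset.sum_coe_sort S (fun l => Ωt (k.1 - l) * F' l)]
      rw [← hsum]
      exact this
    have hgf : f' = g := hinj (by rw [hf'eq, hg])
    funext k
    by_cases hk : k ∈ S
    · have : f' ⟨k, hk⟩ = g ⟨k, hk⟩ := by rw [hgf]
      rw [hFval k hk]
      exact this
    · rw [hF'out k hk, hFout k hk]
  · -- summability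
    apply summable_of_ne_finset_zero (s := S)
    intro k hk
    rw [hFout k hk, norm_zero, zero_mul]
  · -- bound
    have htF : (∑' k : Fin d → ℤ, ‖F k‖ * w k) = ∑ k ∈ S, ‖F k‖ * w k := by
      apply tsum_eq_sum
      intro b hb; rw [hFout b hb, norm_zero, zero_mul]
    have htP : (∑' k : Fin d → ℤ, ‖P k‖ * w k) = ∑ k ∈ S, ‖P k‖ * w k := by
      apply tsum_eq_sum
      intro b hb
      rw [hPsupp b (fun h => hb ((hSmem b).mpr h)), norm_zero, zero_mul]
    have := aux F P hFeqFin
    rw [hwdef] at htF htP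
    rw [htF, htP]
    rw [div_mul_eq_mul_div, le_div_iff₀ hN]
    nlinarith
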